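/- arXiv:1710.03411 — 2 statements merged into one kernel-verified Lean document; each statement's English description precedes it below -/
import Mathlib

section
/- Let X be a uniquely arcwise connected continuum and let Y ⊆ X be either a tree, or the image of an oscillatory ray, or the image of a bi-sided-oscillatory line in X. Then for every x ∈ X there is a unique point y ∈ Y such that [x, y] ∩ Y = {y} (where for x ∈ Y one takes y = x); hence the quasi-retraction r_Y : X → Y, x ↦ y, is well defined. -/
/-- `A` is an arc in `X` joining `x` and `y`: the image of a continuous injection
from `[0,1]` sending `0` to `x` and `1` to `y`. -/
def IsArcBetween {X : Type*} [TopologicalSpace X] (A : Set X) (x y : X) : Prop :=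
  ∃ f : unitInterval → X, Continuous f ∧ Function.Injective f ∧
    f 0 = x ∧ f 1 = y ∧ Set.range f = A

/-- `A` is an arc in `X` (a subspace homeomorphic to `[0,1]`). -/
def IsArc {X : Type*} [TopologicalSpace X] (A : Set X) : Prop :=
  ∃ x y, IsArcBetween A x y

/-- `X` is uniquely arcwise connected: any two distinct points are joined by a unique arc. -/
def UniquelyArcwiseConnected (X : Type*) [TopologicalSpace X] : Prop :=
  ∀ x y : X, x ≠ y → ∃! A : Set X, IsArcBetween A x y

/-- A dendrite: a (metrizable) continuum which is locally connected and uniquely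
arcwise connected. -/
def IsDendrite (X : Type*) [TopologicalSpace X] : Prop :=
  Nonempty X ∧ CompactSpace X ∧ ConnectedSpace X ∧
    TopologicalSpace.MetrizableSpace X ∧ LocallyConnectedSpace X ∧
    UniquelyArcwiseConnected X

/-- A subset `Y` of `X` is a tree: it is a dendrite (with the subspace topology)
which is the union of finitely many arcs. -/
def IsTree {X : Type*} [TopologicalSpace X] (Y : Set X) : Prop :=
  IsDendrite Y ∧ ∃ (n : ℕ) (A : Fin n → Set X), (∀ i, IsArc (A i)) ∧ Y = ⋃ i, A i

/-- `Y` is the image of an oscillatory ray: a continuous injection `φ : [0, ∞) → X`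
with image `Y` such that `⋂ n closure (φ [n, ∞))` contains at least two points. -/
def IsOscillatoryRaySet {X : Type*} [TopologicalSpace X] (Y : Set X) : Prop :=
  ∃ φ : ℝ → X, ContinuousOn φ (Set.Ici 0) ∧ Set.InjOn φ (Set.Ici 0) ∧
    φ '' Set.Ici 0 = Y ∧
    ∃ u v : X, u ≠ v ∧
      ∀ n : ℕ, u ∈ closure (φ '' Set.Ici (n : ℝ)) ∧ v ∈ closure (φ '' Set.Ici (n : ℝ))

/-- `Y` is the image of a bi-sided-oscillatory line: a continuous injection
`ψ : (−∞, ∞) → X` with image `Y` such that both `⋂ n closure (ψ (−∞, −n])` and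
`⋂ n closure (ψ [n, ∞))` contain at least two points. -/
def IsBiOscillatoryLineSet {X : Type*} [TopologicalSpace X] (Y : Set X) : Prop :=
  ∃ ψ : ℝ → X, Continuous ψ ∧ Function.Injective ψ ∧ Set.range ψ = Y ∧
    (∃ u v : X, u ≠ v ∧
      ∀ n : ℕ, u ∈ closure (ψ '' Set.Iic (-(n : ℝ))) ∧
        v ∈ closure (ψ '' Set.Iic (-(n : ℝ)))) ∧
    (∃ u v : X, u ≠ v ∧
      ∀ n : ℕ, u ∈ closure (ψ '' Set.Ici (n : ℝ)) ∧ v ∈ closure (ψ '' Set.Ici (n : ℝ)))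

/-- `y` is the quasi-retraction of `x` to `Y`: `y ∈ Y`, and either `x = y` (the case
`x ∈ Y`), or the arc `[x, y]` meets `Y` exactly in `{y}`. -/
def QuasiRetractPt {X : Type*} [TopologicalSpace X] (Y : Set X) (x y : X) : Prop :=
  y ∈ Y ∧ (x = y ∨ ∃ A : Set X, IsArcBetween A x y ∧ A ∩ Y = {y})


open Set unitInterval

theorem isArcBetween_symm {X : Type*} [TopologicalSpace X] {A : Set X} {x y : X}
    (h : IsArcBetween A x y) : IsArcBetween A y x := by
  obtain ⟨f, hc, hi, h0, h1, hr⟩ := h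
  refine ⟨f ∘ unitInterval.symm, hc.comp unitInterval.continuous_symm,
    hi.comp unitInterval.symm_bijective.injective, by simp [unitInterval.symm_zero, h1],
    by simp [unitInterval.symm_one, h0], ?_⟩
  rw [Set.range_comp, unitInterval.symm_bijective.surjective.range_eq, Set.image_univ, hr]

theorem isArcBetween_image_Icc {X : Type*} [TopologicalSpace X] {F : ℝ → X} {a b : ℝ}
    (hab : a < b) (hc : ContinuousOn F (Icc a b)) (hi : InjOn F (Icc a b)) :
    IsArcBetween (F '' Icc a b) (F a) (F b) := by
  have hmem : ∀ r : unitInterval, a + (r : ℝ) * (b - a) ∈ Icc a b := by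
    intro r
    constructor
    · nlinarith [r.2.1, r.2.2]
    · nlinarith [r.2.1, r.2.2]
  refine ⟨fun r => F (a + (r : ℝ) * (b - a)), hc.comp_continuous (by continuity) hmem,
    ?_, by simp, by simp, ?_⟩
  · intro r s h
    have := hi (hmem r) (hmem s) h
    have hba : b - a ≠ 0 := sub_ne_zero.2 hab.ne'
    ext
    have : (r : ℝ) * (b - a) = (s : ℝ) * (b - a) := by linarith
    exact mul_right_cancel₀ hba this
  · ext z
    constructor
    · rintro ⟨r, rfl⟩
      exact ⟨_, hmem r, rfl⟩
    · rintro ⟨u, hu, rfl⟩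
      refine ⟨⟨(u - a) / (b - a), ?_, ?_⟩, ?_⟩
      · exact div_nonneg (by linarith [hu.1]) (by linarith)
      · rw [div_le_one (by linarith)]
        linarith [hu.2]
      · show F _ = F u
        congr 1
        show a + (u - a) / (b - a) * (b - a) = u
        rw [div_mul_cancel₀ _ (by linarith : b - a ≠ 0)]
        ring

theorem exists_arc_first_hit {X : Type*} [TopologicalSpace X] {Y : Set X} {F : ℝ → X} {x : X}
    {t : ℝ} (hc : Continuous F) (hi : InjOn F (Icc 0 1)) (hF0 : F 0 = x) (hx : x ∉ Y)
    (ht : t ∈ Icc (0:ℝ) 1) (hty : F t ∈ Y) (hmin : ∀ u ∈ Icc (0:ℝ) 1, F u ∈ Y → t ≤ u) :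
    QuasiRetractPt Y x (F t) := by
  have ht0 : 0 < t := by
    rcases lt_or_eq_of_le ht.1 with h | h
    · exact h
    · rw [← h, hF0] at hty
      exact absurd hty hx
  refine ⟨hty, Or.inr ⟨F '' Icc 0 t, ?_, ?_⟩⟩
  · have := isArcBetween_image_Icc ht0 hc.continuousOn
      (hi.mono (Icc_subset_Icc le_rfl ht.2))
    rwa [hF0] at this
  · apply Subset.antisymm
    · rintro z ⟨⟨u, hu, rfl⟩, hzY⟩
      have h1 := hmin u ⟨hu.1, hu.2.trans ht.2⟩ hzY
      have : u = t := le_antisymm hu.2 h1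
      simp [this]
    · rw [singleton_subset_iff]
      exact ⟨⟨t, ⟨ht0.le, le_rfl⟩, rfl⟩, hty⟩

/-- The key uniqueness lemma. -/
theorem quasiRetractPt_unique {X : Type*} [TopologicalSpace X] [T2Space X]
    (hX : UniquelyArcwiseConnected X) {Y : Set X}
    (harc : ∀ y1 ∈ Y, ∀ y2 ∈ Y, y1 ≠ y2 → ∃ A, IsArcBetween A y1 y2 ∧ A ⊆ Y)
    {x y1 y2 : X} (h1 : QuasiRetractPt Y x y1) (h2 : QuasiRetractPt Y x y2) : y1 = y2 := by
  by_contra hne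
  obtain ⟨hy1, h1⟩ := h1
  obtain ⟨hy2, h2⟩ := h2
  -- reduce to the case of genuine arcs on both sides
  have memArc : ∀ {A : Set X} {a b : X}, IsArcBetween A a b → a ∈ A ∧ b ∈ A := by
    rintro A a b ⟨f, _, _, h0, hh1, hr⟩
    exact ⟨hr ▸ h0 ▸ mem_range_self 0, hr ▸ hh1 ▸ mem_range_self 1⟩
  rcases h1 with rfl | ⟨A1, hA1, hA1Y⟩
  · rcases h2 with rfl | ⟨A2, hA2, hA2Y⟩
    · exact hne rfl
    · have hxm : x ∈ A2 ∩ Y := ⟨(memArc hA2).1, hy1⟩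
      rw [hA2Y] at hxm
      exact hne hxm
  rcases h2 with rfl | ⟨A2, hA2, hA2Y⟩
  · have hxm : x ∈ A1 ∩ Y := ⟨(memArc hA1).1, hy2⟩
    rw [hA1Y] at hxm
    exact hne hxm.symm
  obtain ⟨f1, hf1c, hf1i, hf10, hf11, hf1r⟩ := hA1
  obtain ⟨f2, hf2c, hf2i, hf20, hf21, hf2r⟩ := hA2
  set F1 : ℝ → X := f1 ∘ projIcc 0 1 zero_le_one with hF1def
  set F2 : ℝ → X := f2 ∘ projIcc 0 1 zero_le_one with hF2def
  have hF1c : Continuous F1 := hf1c.comp continuous_projIcc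
  have hF2c : Continuous F2 := hf2c.comp continuous_projIcc
  have hF1eq : ∀ u (h : u ∈ Icc (0:ℝ) 1), F1 u = f1 ⟨u, h⟩ := fun u h => by
    rw [hF1def]
    show f1 (projIcc 0 1 zero_le_one u) = _
    rw [projIcc_of_mem _ h]
  have hF2eq : ∀ u (h : u ∈ Icc (0:ℝ) 1), F2 u = f2 ⟨u, h⟩ := fun u h => by
    rw [hF2def]
    show f2 (projIcc 0 1 zero_le_one u) = _
    rw [projIcc_of_mem _ h]
  have hF1i : InjOn F1 (Icc 0 1) := fun u hu v hv h => by
    rw [hF1eq u hu, hF1eq v hv] at h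
    exact congrArg Subtype.val (hf1i h)
  have hF2i : InjOn F2 (Icc 0 1) := fun u hu v hv h => by
    rw [hF2eq u hu, hF2eq v hv] at h
    exact congrArg Subtype.val (hf2i h)
  have hA2cl : IsClosed A2 := hf2r ▸ (isCompact_range hf2c).isClosed
  set K : Set ℝ := Icc 0 1 ∩ F1 ⁻¹' A2 with hKdef
  have hKcl : IsClosed K := isClosed_Icc.inter (hA2cl.preimage hF1c)
  have hK0 : (0:ℝ) ∈ K := by
    constructor
    · exact ⟨le_rfl, zero_le_one⟩
    · show F1 0 ∈ A2
      rw [hF1eq 0 ⟨le_rfl, zero_le_one⟩]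
      have h0 : (⟨0, ⟨le_rfl, zero_le_one⟩⟩ : unitInterval) = 0 := rfl
      rw [h0, hf10, ← hf2r, ← hf20]
      exact mem_range_self 0
  have hKbdd : BddAbove K := BddAbove.mono (fun u hu => hu.1) bddAbove_Icc
  set t : ℝ := sSup K with htdef
  have htK : t ∈ K := hKcl.csSup_mem ⟨0, hK0⟩ hKbdd
  have htmax : ∀ u ∈ K, u ≤ t := fun u hu => le_csSup hKbdd hu
  set p : X := F1 t with hpdef
  have hpA2 : p ∈ A2 := htK.2
  have hpA1 : p ∈ A1 := by
    rw [hpdef, hF1eq t htK.1]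
    exact hf1r ▸ mem_range_self _
  have hpy1 : p ≠ y1 := by
    intro h
    have : y1 ∈ A2 ∩ Y := ⟨h ▸ hpA2, hy1⟩
    rw [hA2Y] at this
    exact hne this
  have hpy2 : p ≠ y2 := by
    intro h
    have : y2 ∈ A1 ∩ Y := ⟨h ▸ hpA1, hy2⟩
    rw [hA1Y] at this
    exact hne this.symm
  have ht1 : t < 1 := by
    rcases lt_or_eq_of_le htK.1.2 with h | h
    · exact h
    · exact absurd (by rw [hpdef, h, hF1eq 1 ⟨zero_le_one, le_rfl⟩]; exact hf11) hpy1
  obtain ⟨r0, hr0⟩ : ∃ r0 : unitInterval, f2 r0 = p := by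
    rw [← hf2r] at hpA2; exact hpA2
  set r : ℝ := (r0 : ℝ) with hrdef
  have hrI : r ∈ Icc (0:ℝ) 1 := r0.2
  have hF2r : F2 r = p := by
    rw [hF2eq r hrI]
    exact (congrArg f2 (Subtype.ext rfl)).trans hr0
  have hr1 : r < 1 := by
    rcases lt_or_eq_of_le hrI.2 with h | h
    · exact h
    · exfalso
      apply hpy2
      rw [← hF2r, hF2eq r hrI, ← hf21]
      congr 1
      exact Subtype.ext h
  -- the concatenated arc
  set G : ℝ → X := fun s => if s ≤ 0 then F1 (t - (1 - t) * s) else F2 (r + (1 - r) * s)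
    with hGdef
  have hGc : Continuous G := by
    apply Continuous.if_le (by fun_prop) (by fun_prop) continuous_id continuous_const
    intro s hs
    have hs' : s = 0 := hs
    subst hs'
    simpa using hF2r.symm
  have hl1mem : ∀ s ∈ Icc (-1:ℝ) 0, t - (1 - t) * s ∈ Icc t 1 := by
    intro s hs
    constructor <;> nlinarith [hs.1, hs.2, htK.1.1]
  have hl2mem : ∀ s ∈ Icc (0:ℝ) 1, r + (1 - r) * s ∈ Icc r 1 := by
    intro s hs
    constructor <;> nlinarith [hs.1, hs.2]
  have hGi : InjOn G (Icc (-1) 1) := by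
    intro s hs s' hs' hss
    rcases le_or_gt s 0 with h | h <;> rcases le_or_gt s' 0 with h' | h'
    · rw [hGdef] at hss
      simp only [if_pos h, if_pos h'] at hss
      have m1 := hl1mem s ⟨hs.1, h⟩
      have m2 := hl1mem s' ⟨hs'.1, h'⟩
      have := hF1i (Icc_subset_Icc htK.1.1 le_rfl m1) (Icc_subset_Icc htK.1.1 le_rfl m2) hss
      nlinarith [ht1]
    · exfalso
      rw [hGdef] at hss
      simp only [if_pos h, if_neg (not_le.2 h')] at hss
      have m1 := hl1mem s ⟨hs.1, h⟩
      have m1' : t - (1 - t) * s ∈ Icc (0:ℝ) 1 := Icc_subset_Icc htK.1.1 le_rfl m1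
      have hmemA2 : F1 (t - (1 - t) * s) ∈ A2 := by
        rw [hss, hF2eq _ (Icc_subset_Icc hrI.1 le_rfl (hl2mem s' ⟨h'.le, hs'.2⟩))]
        exact hf2r ▸ mem_range_self _
      have hinK : t - (1 - t) * s ∈ K := ⟨m1', hmemA2⟩
      have hle := htmax _ hinK
      have hs0 : s = 0 := by nlinarith [m1.1, ht1]
      rw [hs0] at hss
      simp only [mul_zero, sub_zero] at hss
      have : F2 r = F2 (r + (1 - r) * s') := by rw [hF2r, hpdef]; exact hss
      have := hF2i hrI (Icc_subset_Icc hrI.1 le_rfl (hl2mem s' ⟨h'.le, hs'.2⟩)) this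
      nlinarith
    · exfalso
      rw [hGdef] at hss
      simp only [if_pos h', if_neg (not_le.2 h)] at hss
      have m1 := hl1mem s' ⟨hs'.1, h'⟩
      have m1' : t - (1 - t) * s' ∈ Icc (0:ℝ) 1 := Icc_subset_Icc htK.1.1 le_rfl m1
      have hmemA2 : F1 (t - (1 - t) * s') ∈ A2 := by
        rw [← hss, hF2eq _ (Icc_subset_Icc hrI.1 le_rfl (hl2mem s ⟨h.le, hs.2⟩))]
        exact hf2r ▸ mem_range_self _
      have hinK : t - (1 - t) * s' ∈ K := ⟨m1', hmemA2⟩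
      have hle := htmax _ hinK
      have hs0 : s' = 0 := by nlinarith [m1.1, ht1]
      rw [hs0] at hss
      simp only [mul_zero, sub_zero] at hss
      have : F2 r = F2 (r + (1 - r) * s) := by rw [hF2r, hpdef]; exact hss.symm
      have := hF2i hrI (Icc_subset_Icc hrI.1 le_rfl (hl2mem s ⟨h.le, hs.2⟩)) this
      nlinarith
    · rw [hGdef] at hss
      simp only [if_neg (not_le.2 h), if_neg (not_le.2 h')] at hss
      have := hF2i (Icc_subset_Icc hrI.1 le_rfl (hl2mem s ⟨h.le, hs.2⟩))
        (Icc_subset_Icc hrI.1 le_rfl (hl2mem s' ⟨h'.le, hs'.2⟩)) hss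
      nlinarith [hr1]
  have hGarc : IsArcBetween (G '' Icc (-1) 1) (G (-1)) (G 1) :=
    isArcBetween_image_Icc (by norm_num) hGc.continuousOn hGi
  have hGm1 : G (-1) = y1 := by
    rw [hGdef]
    simp only [if_pos (by norm_num : (-1:ℝ) ≤ 0)]
    have : t - (1 - t) * (-1) = 1 := by ring
    rw [this, hF1eq 1 ⟨zero_le_one, le_rfl⟩]
    exact hf11
  have hG1 : G 1 = y2 := by
    rw [hGdef]
    simp only [if_neg (by norm_num : ¬ (1:ℝ) ≤ 0)]
    have : r + (1 - r) * 1 = 1 := by ring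
    rw [this, hF2eq 1 ⟨zero_le_one, le_rfl⟩]
    exact hf21
  rw [hGm1, hG1] at hGarc
  obtain ⟨A', hA'arc, hA'Y⟩ := harc y1 hy1 y2 hy2 hne
  obtain ⟨_, _, huniq⟩ := hX y1 y2 hne
  have hGY : G '' Icc (-1) 1 ⊆ Y := by
    rw [huniq _ hGarc, ← huniq _ hA'arc]
    exact hA'Y
  have hpY : p ∈ Y := by
    apply hGY
    refine ⟨0, ⟨by norm_num, zero_le_one⟩, ?_⟩
    rw [hGdef]
    simp
    exact hpdef.symm
  have : p ∈ A1 ∩ Y := ⟨hpA1, hpY⟩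
  rw [hA1Y] at this
  exact hpy1 this

/-- Core lemma: along an arc starting outside the ray, the set of parameters hitting
the ray image attains its infimum (otherwise the tail of the ray would be trapped near
one point, contradicting oscillation). -/
theorem ray_sInf_mem {X : Type*} [MetricSpace X] (hX : UniquelyArcwiseConnected X)
    {φ : ℝ → X} (hφc : ContinuousOn φ (Ici 0)) (hφi : InjOn φ (Ici 0))
    {u v : X} (huv : u ≠ v)
    (hosc : ∀ n : ℕ, u ∈ closure (φ '' Ici (n : ℝ)) ∧ v ∈ closure (φ '' Ici (n : ℝ)))
    {F : ℝ → X} (hFc : Continuous F) (hFi : InjOn F (Icc 0 1))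
    (hx : F 0 ∉ φ '' Ici 0)
    (hTne : {t : ℝ | t ∈ Icc (0:ℝ) 1 ∧ F t ∈ φ '' Ici 0}.Nonempty) :
    sInf {t : ℝ | t ∈ Icc (0:ℝ) 1 ∧ F t ∈ φ '' Ici 0}
      ∈ {t : ℝ | t ∈ Icc (0:ℝ) 1 ∧ F t ∈ φ '' Ici 0} := by
  set T := {t : ℝ | t ∈ Icc (0:ℝ) 1 ∧ F t ∈ φ '' Ici 0} with hTdef
  have hbdd : BddBelow T := BddBelow.mono (fun t ht => ht.1) bddBelow_Icc
  set c := sInf T with hcdef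
  have hc0 : 0 ≤ c := le_csInf hTne (fun t ht => ht.1.1)
  have hc1 : c ≤ 1 := by
    obtain ⟨t1, ht1⟩ := hTne
    exact (csInf_le hbdd ht1).trans ht1.1.2
  by_contra hmem
  have hzY : F c ∉ φ '' Ici 0 := fun hm => hmem ⟨⟨hc0, hc1⟩, hm⟩
  have hgt : ∀ t ∈ T, c < t := fun t ht =>
    lt_of_le_of_ne (csInf_le hbdd ht) (by rintro rfl; exact hmem ht)
  have hnear : ∀ δ : ℝ, 0 < δ → ∃ t ∈ T, t < c + δ := fun δ hδ =>
    exists_lt_of_csInf_lt hTne (by linarith)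
  -- Step A: near `c` the arc hits the ray at arbitrarily late parameters
  have stepA : ∀ B : ℝ, ∀ δ : ℝ, 0 < δ →
      ∃ t s : ℝ, t ∈ T ∧ t < c + δ ∧ B < s ∧ 0 ≤ s ∧ φ s = F t := by
    intro B δ hδ
    have hK : IsCompact (φ '' Icc 0 B) :=
      isCompact_Icc.image_of_continuousOn (hφc.mono Icc_subset_Ici_self)
    have hzC : F c ∉ φ '' Icc 0 B := by
      rintro ⟨s, hs, hφs⟩
      exact hzY ⟨s, hs.1, hφs⟩
    obtain ⟨ε', hε', hball⟩ := Metric.isOpen_iff.1 hK.isClosed.isOpen_compl _ hzC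
    obtain ⟨δ', hδ', hδ'p⟩ := Metric.continuousAt_iff.1 hFc.continuousAt ε' hε'
    obtain ⟨t, htT, htlt⟩ := hnear (min δ δ') (lt_min hδ hδ')
    have htc : c < t := hgt t htT
    have hdist : dist t c < δ' := by
      rw [Real.dist_eq, abs_of_pos (by linarith)]
      have := min_le_right δ δ'
      linarith
    have hFtball : F t ∈ Metric.ball (F c) ε' := Metric.mem_ball.2 (hδ'p hdist)
    have hFtnot : F t ∉ φ '' Icc 0 B := fun hmem' => (hball hFtball) hmem'
    obtain ⟨s, hs0, hφs⟩ := htT.2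
    refine ⟨t, s, htT, ?_, ?_, hs0, hφs⟩
    · have := min_le_left δ δ'
      linarith
    · by_contra hBs
      exact hFtnot ⟨s, ⟨hs0, not_lt.1 hBs⟩, hφs⟩
  set z := F c with hzdef
  set ε := dist u v / 3 with hεdef
  have hε : 0 < ε := by
    have := dist_pos.2 huv
    rw [hεdef]; linarith
  obtain ⟨δb, hδb, hδbp⟩ := Metric.continuousAt_iff.1 hFc.continuousAt ε hε
  obtain ⟨t₀, s₀, ht₀T, ht₀lt, hs₀pos, hs₀0, hφ₀⟩ := stepA 0 δb hδb
  have ht₀c : c < t₀ := hgt _ ht₀T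
  -- Step C: the tail of the ray is trapped near `z`
  have stepC : ∀ s : ℝ, s₀ ≤ s → dist (φ s) z ≤ ε := by
    intro s hss₀
    obtain ⟨t₁, s₁, ht₁T, ht₁lt, hs₁gt, hs₁0, hφ₁⟩ := stepA s (t₀ - c) (by linarith)
    have ht₁c : c < t₁ := hgt _ ht₁T
    have ht₁t₀ : t₁ < t₀ := by linarith
    have hs₀s₁ : s₀ < s₁ := lt_of_le_of_lt hss₀ hs₁gt
    have hsub1 : Icc s₀ s₁ ⊆ Ici (0:ℝ) := fun y hy => le_trans hs₀0 hy.1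
    have harc1 : IsArcBetween (φ '' Icc s₀ s₁) (φ s₀) (φ s₁) :=
      isArcBetween_image_Icc hs₀s₁ (hφc.mono hsub1) (hφi.mono hsub1)
    have harc2 : IsArcBetween (F '' Icc t₁ t₀) (φ s₀) (φ s₁) := by
      have h2 := isArcBetween_image_Icc ht₁t₀ hFc.continuousOn
        (hFi.mono (Icc_subset_Icc (le_trans hc0 ht₁c.le) ht₀T.1.2))
      rw [hφ₀, hφ₁]
      exact isArcBetween_symm h2
    have hne' : φ s₀ ≠ φ s₁ := fun hh => by
      have := hφi hs₀0 (le_trans hs₀0 hs₀s₁.le) hh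
      linarith
    obtain ⟨A0, hA0, huniq⟩ := hX (φ s₀) (φ s₁) hne'
    have heq : φ '' Icc s₀ s₁ = F '' Icc t₁ t₀ := (huniq _ harc1).trans (huniq _ harc2).symm
    have hsmem : φ s ∈ F '' Icc t₁ t₀ := heq ▸ ⟨s, ⟨hss₀, hs₁gt.le⟩, rfl⟩
    obtain ⟨t, htmem, hFt⟩ := hsmem
    have hdist : dist t c < δb := by
      rw [Real.dist_eq, abs_of_pos (by linarith [htmem.1, htmem.2])]
      linarith [htmem.1, htmem.2]
    rw [← hFt]
    exact (hδbp hdist).le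
  -- contradiction with oscillation
  set N := ⌈s₀⌉₊ with hNdef
  have hsubs : φ '' Ici (N : ℝ) ⊆ Metric.closedBall z ε := by
    rintro _ ⟨s, hs, rfl⟩
    exact Metric.mem_closedBall.2 (stepC s (le_trans (Nat.le_ceil s₀) hs))
  have hcl : closure (φ '' Ici (N : ℝ)) ⊆ Metric.closedBall z ε :=
    closure_minimal hsubs Metric.isClosed_closedBall
  have hu : dist u z ≤ ε := Metric.mem_closedBall.1 (hcl (hosc N).1)
  have hv : dist v z ≤ ε := Metric.mem_closedBall.1 (hcl (hosc N).2)
  have htri : dist u v ≤ dist u z + dist z v := dist_triangle u z v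
  rw [dist_comm z v] at htri
  have := dist_pos.2 huv
  rw [hεdef] at hu hv
  linarith

theorem exists_param {X : Type*} [TopologicalSpace X] (hX : UniquelyArcwiseConnected X)
    {x y0 : X} (hne : x ≠ y0) :
    ∃ F : ℝ → X, Continuous F ∧ InjOn F (Icc 0 1) ∧ F 0 = x ∧ F 1 = y0 := by
  obtain ⟨A, ⟨f, hc, hi, h0, h1, hr⟩, -⟩ := hX x y0 hne
  have key : ∀ u (h : u ∈ Icc (0:ℝ) 1), (f ∘ projIcc 0 1 zero_le_one) u = f ⟨u, h⟩ := by
    intro u h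
    show f (projIcc 0 1 zero_le_one u) = _
    rw [projIcc_of_mem _ h]
  refine ⟨f ∘ projIcc 0 1 zero_le_one, hc.comp continuous_projIcc, ?_, ?_, ?_⟩
  · intro a ha b hb hab
    rw [key a ha, key b hb] at hab
    exact congrArg Subtype.val (hi hab)
  · rw [key 0 ⟨le_rfl, zero_le_one⟩, ← h0]
    exact congrArg f (Subtype.ext rfl)
  · rw [key 1 ⟨zero_le_one, le_rfl⟩, ← h1]
    exact congrArg f (Subtype.ext rfl)

theorem exists_qrp {X : Type*} [MetricSpace X] (hX : UniquelyArcwiseConnected X) {Y : Set X}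
    (hYne : Y.Nonempty)
    (hinf : ∀ F : ℝ → X, Continuous F → InjOn F (Icc 0 1) → F 0 ∉ Y →
      {t : ℝ | t ∈ Icc (0:ℝ) 1 ∧ F t ∈ Y}.Nonempty →
      sInf {t : ℝ | t ∈ Icc (0:ℝ) 1 ∧ F t ∈ Y} ∈ {t : ℝ | t ∈ Icc (0:ℝ) 1 ∧ F t ∈ Y})
    (x : X) : ∃ y, QuasiRetractPt Y x y := by
  by_cases hx : x ∈ Y
  · exact ⟨x, hx, Or.inl rfl⟩
  · obtain ⟨y0, hy0⟩ := hYne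
    have hne : x ≠ y0 := fun h => hx (h ▸ hy0)
    obtain ⟨F, hFc, hFi, hF0, hF1⟩ := exists_param hX hne
    have hTne : {t : ℝ | t ∈ Icc (0:ℝ) 1 ∧ F t ∈ Y}.Nonempty := by
      refine ⟨1, ⟨⟨zero_le_one, le_rfl⟩, ?_⟩⟩
      rw [hF1]; exact hy0
    have hbdd : BddBelow {t : ℝ | t ∈ Icc (0:ℝ) 1 ∧ F t ∈ Y} :=
      BddBelow.mono (fun t ht => ht.1) bddBelow_Icc
    have hx0 : F 0 ∉ Y := by rw [hF0]; exact hx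
    have hmem := hinf F hFc hFi hx0 hTne
    exact ⟨F (sInf {t : ℝ | t ∈ Icc (0:ℝ) 1 ∧ F t ∈ Y}),
      exists_arc_first_hit hFc hFi hF0 hx hmem.1 hmem.2
        (fun u hu huY => csInf_le hbdd ⟨hu, huY⟩)⟩

-- Case lemmas for the line: hitting set splits along the two halves of the line.
theorem line_sInf_mem {X : Type*} [MetricSpace X] (hX : UniquelyArcwiseConnected X)
    {ψ : ℝ → X} (hψc : Continuous ψ) (hψi : Function.Injective ψ)
    {um vm : X} (humvm : um ≠ vm)
    (hoscm : ∀ n : ℕ, um ∈ closure (ψ '' Iic (-(n : ℝ))) ∧ vm ∈ closure (ψ '' Iic (-(n : ℝ))))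
    {up vp : X} (hupvp : up ≠ vp)
    (hoscp : ∀ n : ℕ, up ∈ closure (ψ '' Ici (n : ℝ)) ∧ vp ∈ closure (ψ '' Ici (n : ℝ)))
    {F : ℝ → X} (hFc : Continuous F) (hFi : InjOn F (Icc 0 1))
    (hx : F 0 ∉ range ψ)
    (hTne : {t : ℝ | t ∈ Icc (0:ℝ) 1 ∧ F t ∈ range ψ}.Nonempty) :
    sInf {t : ℝ | t ∈ Icc (0:ℝ) 1 ∧ F t ∈ range ψ}
      ∈ {t : ℝ | t ∈ Icc (0:ℝ) 1 ∧ F t ∈ range ψ} := by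
  set φm : ℝ → X := fun s => ψ (-s) with hφmdef
  have himg : ∀ n : ℝ, φm '' Ici n = ψ '' Iic (-n) := by
    intro n
    ext z
    constructor
    · rintro ⟨s, hs, rfl⟩
      exact ⟨-s, by simpa using hs, rfl⟩
    · rintro ⟨w, hw, rfl⟩
      refine ⟨-w, by simp only [mem_Ici]; linarith [mem_Iic.1 hw], by simp [hφmdef]⟩
  have hφmc : ContinuousOn φm (Ici 0) := (hψc.comp continuous_neg).continuousOn
  have hφmi : InjOn φm (Ici 0) := fun a _ b _ h => neg_inj.1 (hψi h)
  have hoscm' : ∀ n : ℕ, um ∈ closure (φm '' Ici (n : ℝ)) ∧ vm ∈ closure (φm '' Ici (n : ℝ)) := by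
    intro n
    rw [himg]
    exact hoscm n
  set Tp := {t : ℝ | t ∈ Icc (0:ℝ) 1 ∧ F t ∈ ψ '' Ici 0} with hTp
  set Tm := {t : ℝ | t ∈ Icc (0:ℝ) 1 ∧ F t ∈ φm '' Ici 0} with hTm
  have hunion : {t : ℝ | t ∈ Icc (0:ℝ) 1 ∧ F t ∈ range ψ} = Tp ∪ Tm := by
    ext t
    constructor
    · rintro ⟨ht, s, hs⟩
      rcases le_total 0 s with h | h
      · exact Or.inl ⟨ht, s, h, hs⟩
      · exact Or.inr ⟨ht, -s, by simpa using h, by simpa [hφmdef] using hs⟩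
    · rintro (⟨ht, s, _, hs⟩ | ⟨ht, s, _, hs⟩)
      · exact ⟨ht, s, hs⟩
      · exact ⟨ht, -s, hs⟩
  have hxp : F 0 ∉ ψ '' Ici 0 := fun ⟨s, _, h⟩ => hx ⟨s, h⟩
  have hxm : F 0 ∉ φm '' Ici 0 := fun ⟨s, _, h⟩ => hx ⟨-s, h⟩
  have hmemp := ray_sInf_mem hX hψc.continuousOn (hψi.injOn) hupvp hoscp hFc hFi hxp
  have hmemm := ray_sInf_mem hX hφmc hφmi humvm hoscm' hFc hFi hxm
  rw [hunion] at hTne ⊢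
  have hbddp : BddBelow Tp := BddBelow.mono (fun t ht => ht.1) bddBelow_Icc
  have hbddm : BddBelow Tm := BddBelow.mono (fun t ht => ht.1) bddBelow_Icc
  rcases Tp.eq_empty_or_nonempty with hp | hp
  · have : Tp ∪ Tm = Tm := by rw [hp, empty_union]
    rw [this] at hTne ⊢
    exact hmemm hTne
  rcases Tm.eq_empty_or_nonempty with hm | hm
  · have : Tp ∪ Tm = Tp := by rw [hm, union_empty]
    rw [this] at hTne ⊢
    exact hmemp hp
  rw [csInf_union hbddp hp hbddm hm]
  rcases le_total (sInf Tp) (sInf Tm) with h | h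
  · rw [inf_eq_left.2 h]
    exact Or.inl (hmemp hp)
  · rw [inf_eq_right.2 h]
    exact Or.inr (hmemm hm)

/-- **Section 2.4.** Let `X` be a uniquely arcwise connected continuum and `Y ⊆ X` a
tree, the image of an oscillatory ray, or the image of a bi-sided-oscillatory line.
Then every `x ∈ X` has a unique quasi-retraction point `y ∈ Y` with `[x,y] ∩ Y = {y}`
(and `y = x` for `x ∈ Y`); so the quasi-retraction `r_Y : X → Y` is well defined. -/
theorem quasiRetraction_wellDefined
    {X : Type*} [MetricSpace X] [CompactSpace X] [ConnectedSpace X] [Nonempty X]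
    (hX : UniquelyArcwiseConnected X) (Y : Set X)
    (hY : IsTree Y ∨ IsOscillatoryRaySet Y ∨ IsBiOscillatoryLineSet Y) :
    ∀ x : X, ∃! y : X, QuasiRetractPt Y x y := by
  -- In each case, we supply: nonemptiness of `Y`, the `sInf`-attainment property,
  -- and arcwise connectedness of `Y` within itself.
  suffices h : Y.Nonempty ∧
      (∀ F : ℝ → X, Continuous F → InjOn F (Icc 0 1) → F 0 ∉ Y →
        {t : ℝ | t ∈ Icc (0:ℝ) 1 ∧ F t ∈ Y}.Nonempty →
        sInf {t : ℝ | t ∈ Icc (0:ℝ) 1 ∧ F t ∈ Y} ∈ {t : ℝ | t ∈ Icc (0:ℝ) 1 ∧ F t ∈ Y}) ∧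
      (∀ y1 ∈ Y, ∀ y2 ∈ Y, y1 ≠ y2 → ∃ A, IsArcBetween A y1 y2 ∧ A ⊆ Y) by
    obtain ⟨hYne, hinf, harc⟩ := h
    intro x
    obtain ⟨y, hy⟩ := exists_qrp hX hYne hinf x
    exact ⟨y, hy, fun y' hy' => quasiRetractPt_unique hX harc hy' hy⟩
  rcases hY with hT | hR | hL
  · -- tree case
    obtain ⟨⟨hne, hcomp, -, -, -, hYuac⟩, -⟩ := hT
    have hYcl : IsClosed Y := (isCompact_iff_compactSpace.2 hcomp).isClosed
    refine ⟨nonempty_subtype.1 hne, ?_, ?_⟩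
    · intro F hFc hFi hx0 hTne
      have heq : {t : ℝ | t ∈ Icc (0:ℝ) 1 ∧ F t ∈ Y} = Icc 0 1 ∩ F ⁻¹' Y := rfl
      rw [heq] at hTne ⊢
      exact (isClosed_Icc.inter (hYcl.preimage hFc)).csInf_mem hTne
        (BddBelow.mono (fun t ht => ht.1) bddBelow_Icc)
    · intro y1 h1 y2 h2 hne12
      have hsub : (⟨y1, h1⟩ : Y) ≠ ⟨y2, h2⟩ := fun h => hne12 (congrArg Subtype.val h)
      obtain ⟨A', ⟨g, hgc, hgi, hg0, hg1, hgr⟩, -⟩ := hYuac _ _ hsub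
      refine ⟨Subtype.val '' A', ⟨fun r => (g r : X), continuous_subtype_val.comp hgc,
        fun a b hab => hgi (Subtype.val_injective hab), by show ((g 0 : Y) : X) = y1; rw [hg0], by show ((g 1 : Y) : X) = y2; rw [hg1], ?_⟩,
        Subtype.coe_image_subset Y A'⟩
      show range (Subtype.val ∘ g) = _
      rw [Set.range_comp, hgr]
  · -- ray case
    obtain ⟨φ, hφc, hφi, hφY, u, v, huv, hosc⟩ := hR
    subst hφY
    refine ⟨⟨φ 0, 0, mem_Ici.2 le_rfl, rfl⟩, ?_, ?_⟩
    · exact fun F hFc hFi hx0 hTne => ray_sInf_mem hX hφc hφi huv hosc hFc hFi hx0 hTne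
    · rintro _ ⟨a, ha, rfl⟩ _ ⟨b, hb, rfl⟩ hne12
      have hab : a ≠ b := fun h => hne12 (h ▸ rfl)
      rcases hab.lt_or_gt with h | h
      · have hsub : Icc a b ⊆ Ici (0:ℝ) := fun y hy => le_trans ha hy.1
        exact ⟨φ '' Icc a b, isArcBetween_image_Icc h (hφc.mono hsub) (hφi.mono hsub),
          image_mono (f := φ) hsub⟩
      · have hsub : Icc b a ⊆ Ici (0:ℝ) := fun y hy => le_trans hb hy.1
        exact ⟨φ '' Icc b a,
          isArcBetween_symm (isArcBetween_image_Icc h (hφc.mono hsub) (hφi.mono hsub)),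
          image_mono (f := φ) hsub⟩
  · -- line case
    obtain ⟨ψ, hψc, hψi, hψY, ⟨um, vm, humvm, hoscm⟩, ⟨up, vp, hupvp, hoscp⟩⟩ := hL
    subst hψY
    refine ⟨⟨ψ 0, mem_range_self 0⟩, ?_, ?_⟩
    · exact fun F hFc hFi hx0 hTne =>
        line_sInf_mem hX hψc hψi humvm hoscm hupvp hoscp hFc hFi hx0 hTne
    · rintro _ ⟨a, rfl⟩ _ ⟨b, rfl⟩ hne12
      have hab : a ≠ b := fun h => hne12 (h ▸ rfl)
      rcases hab.lt_or_gt with h | h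
      · exact ⟨ψ '' Icc a b,
          isArcBetween_image_Icc h hψc.continuousOn (hψi.injOn.mono (subset_univ _)),
          image_subset_range ψ (Icc a b)⟩
      · exact ⟨ψ '' Icc b a,
          isArcBetween_symm
            (isArcBetween_image_Icc h hψc.continuousOn (hψi.injOn.mono (subset_univ _))),
          image_subset_range ψ (Icc b a)⟩
end

section
/- With X, the trees T_n, the arcs I_i, the homeomorphisms h_i : I_i → [0,1], T = ⋃_n T_n, and d(x, y) = Σ_{i=1}^∞ 2^{−i} · l(h_i([x, y] ∩ I_i)) as in the standing construction, d is a convex metric on T. -/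
/-- The arc `[x, y]` in a uniquely arcwise connected space (`{x}` if `x = y`). -/
noncomputable def arcOf {X : Type*} [TopologicalSpace X]
    (hX : UniquelyArcwiseConnected X) (x y : X) : Set X :=
  letI : Decidable (x = y) := Classical.dec _
  if h : x = y then {x} else (hX x y h).choose

/-- The standing construction: in a uniquely arcwise connected continuum `X`, a strictly
increasing sequence of trees `T n = I 0 ∪ ... ∪ I n` built from arcs `I i` meeting
pairwise in at most a point, together with homeomorphisms `h i : I i → [0,1]`. -/
structure StandingConstruction (X : Type*) [MetricSpace X] where
  /-- `X` is uniquely arcwise connected. -/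
  huac : UniquelyArcwiseConnected X
  /-- the arcs `I i` -/
  I : ℕ → Set X
  arc_I : ∀ i, IsArc (I i)
  /-- distinct arcs meet in at most one point -/
  inter_I : ∀ i j, i ≠ j → (I i ∩ I j).Subsingleton
  /-- each partial union `T n = ⋃_{i ≤ n} I i` is a tree -/
  tree_T : ∀ n : ℕ, IsTree (⋃ i ≤ n, I i)
  /-- the sequence of trees is strictly increasing -/
  strict_T : ∀ n : ℕ, (⋃ i ≤ n, I i) ⊂ ⋃ i ≤ n + 1, I i
  /-- the homeomorphisms `h i : I i → [0,1]` -/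
  h : ℕ → X → ℝ
  h_cont : ∀ i, ContinuousOn (h i) (I i)
  h_inj : ∀ i, Set.InjOn (h i) (I i)
  h_image : ∀ i, h i '' I i = Set.Icc (0 : ℝ) 1

/-- The tree `T n` of the standing construction. -/
def StandingConstruction.Tn {X : Type*} [MetricSpace X]
    (sc : StandingConstruction X) (n : ℕ) : Set X :=
  ⋃ i ≤ n, sc.I i

/-- The set `T = ⋃ n T n` of the standing construction. -/
def StandingConstruction.T {X : Type*} [MetricSpace X]
    (sc : StandingConstruction X) : Set X :=
  ⋃ i, sc.I i

/-- The metric `d(x,y) = ∑ i 2^{-(i+1)} l(h i ([x,y] ∩ I i))` of the standing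
construction, where `l` is the length (diameter) of a subinterval of `[0,1]`. -/
noncomputable def StandingConstruction.d {X : Type*} [MetricSpace X]
    (sc : StandingConstruction X) (x y : X) : ℝ :=
  ∑' i : ℕ, (2 : ℝ)⁻¹ ^ (i + 1) *
    Metric.diam (sc.h i '' (arcOf sc.huac x y ∩ sc.I i))

open Set

section ArcBasics
variable {X : Type*} [TopologicalSpace X]

theorem IsArcBetween.ne' {A : Set X} {x y : X} (h : IsArcBetween A x y) : x ≠ y := by
  obtain ⟨f, -, hinj, h0, h1, -⟩ := h
  intro hxy
  have : (0 : unitInterval) = 1 := hinj (by rw [h0, h1, hxy])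
  exact absurd (congrArg Subtype.val this) (by norm_num)

theorem IsArcBetween.symm {A : Set X} {x y : X} (h : IsArcBetween A x y) :
    IsArcBetween A y x := by
  obtain ⟨f, hc, hinj, h0, h1, hr⟩ := h
  refine ⟨f ∘ unitInterval.symm, hc.comp unitInterval.continuous_symm,
    hinj.comp (fun a b hab => unitInterval.symm_bijective.injective hab),
    by simp [h1], by simp [h0], ?_⟩
  rw [Set.range_comp, unitInterval.symm_bijective.surjective.range_eq, Set.image_univ, hr]

theorem arcOf_self (hX : UniquelyArcwiseConnected X) (x : X) : arcOf hX x x = {x} := by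
  simp [arcOf]

theorem isArcBetween_arcOf (hX : UniquelyArcwiseConnected X) {x y : X} (h : x ≠ y) :
    IsArcBetween (arcOf hX x y) x y := by
  rw [arcOf]; simp only [dif_neg h]
  exact (hX x y h).choose_spec.1

theorem arcOf_unique (hX : UniquelyArcwiseConnected X) {A : Set X} {x y : X}
    (h : IsArcBetween A x y) : arcOf hX x y = A := by
  have hne := h.ne'
  rw [arcOf]; simp only [dif_neg hne]
  exact ((hX x y hne).choose_spec.2 A h).symm

theorem arcOf_comm (hX : UniquelyArcwiseConnected X) (x y : X) :
    arcOf hX x y = arcOf hX y x := by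
  by_cases h : x = y
  · subst h; rfl
  · exact arcOf_unique hX ((isArcBetween_arcOf hX (Ne.symm h)).symm)

theorem left_mem_arcOf (hX : UniquelyArcwiseConnected X) (x y : X) : x ∈ arcOf hX x y := by
  by_cases h : x = y
  · subst h; rw [arcOf_self]; exact rfl
  · obtain ⟨f, -, -, h0, -, hr⟩ := isArcBetween_arcOf hX h
    rw [← hr, ← h0]; exact mem_range_self _

theorem right_mem_arcOf (hX : UniquelyArcwiseConnected X) (x y : X) : y ∈ arcOf hX x y := by
  rw [arcOf_comm]; exact left_mem_arcOf hX y x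

theorem isCompact_arcOf (hX : UniquelyArcwiseConnected X) (x y : X) :
    IsCompact (arcOf hX x y) := by
  by_cases h : x = y
  · subst h; rw [arcOf_self]; exact isCompact_singleton
  · obtain ⟨f, hc, -, -, -, hr⟩ := isArcBetween_arcOf hX h
    rw [← hr]; exact isCompact_range hc

theorem isPreconnected_arcOf (hX : UniquelyArcwiseConnected X) (x y : X) :
    IsPreconnected (arcOf hX x y) := by
  by_cases h : x = y
  · subst h; rw [arcOf_self]; exact isPreconnected_singleton
  · obtain ⟨f, hc, -, -, -, hr⟩ := isArcBetween_arcOf hX h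
    rw [← hr, ← Set.image_univ]
    exact isPreconnected_univ.image f hc.continuousOn

theorem IsArc.isCompact {A : Set X} (h : IsArc A) : IsCompact A := by
  obtain ⟨x, y, f, hc, -, -, -, hr⟩ := h
  rw [← hr]; exact isCompact_range hc

/-- Subarc construction: restriction of an arc parametrization to `[s,t]`. -/
theorem subarc {f : unitInterval → X} (hc : Continuous f) (hinj : Function.Injective f)
    {s t : unitInterval} (hst : (s : ℝ) < t) :
    ∃ g : unitInterval → X, Continuous g ∧ Function.Injective g ∧
      g 0 = f s ∧ g 1 = f t ∧ Set.range g = f '' Set.Icc s t := by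
  have hmem : ∀ u : unitInterval, (s : ℝ) + u * (t - s) ∈ unitInterval := by
    intro u
    constructor
    · have := s.2.1
      nlinarith [u.2.1, sub_nonneg.2 hst.le]
    · have h1 : (s : ℝ) + u * (t - s) ≤ s + 1 * (t - s) := by
        nlinarith [u.2.2, sub_nonneg.2 hst.le, u.2.1]
      have := t.2.2
      linarith
  set aff : unitInterval → unitInterval := fun u => ⟨(s : ℝ) + u * (t - s), hmem u⟩ with haff
  have affc : Continuous aff := by
    apply Continuous.subtype_mk
    fun_prop
  have affinj : Function.Injective aff := by
    intro a b hab
    have : (s : ℝ) + a * (t - s) = (s : ℝ) + b * (t - s) := congrArg Subtype.val hab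
    have hts : (0 : ℝ) < t - s := sub_pos.2 hst
    ext
    nlinarith [this]
  have affrange : Set.range aff = Set.Icc s t := by
    ext v
    simp only [Set.mem_range, Set.mem_Icc]
    constructor
    · rintro ⟨u, rfl⟩
      constructor
      · show (s : ℝ) ≤ (s : ℝ) + u * (t - s)
        nlinarith [u.2.1, sub_nonneg.2 hst.le]
      · show (s : ℝ) + u * (t - s) ≤ (t : ℝ)
        nlinarith [u.2.2, sub_nonneg.2 hst.le]
    · rintro ⟨h1, h2⟩
      have hts : (0 : ℝ) < t - s := sub_pos.2 hst
      have h1' : (s : ℝ) ≤ v := h1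
      have h2' : (v : ℝ) ≤ t := h2
      refine ⟨⟨((v : ℝ) - s) / (t - s), ⟨div_nonneg (by linarith) hts.le, ?_⟩⟩, ?_⟩
      · rw [div_le_one hts]; linarith
      · ext
        show (s : ℝ) + ((v : ℝ) - s) / (t - s) * (t - s) = v
        field_simp
        ring
  refine ⟨f ∘ aff, hc.comp affc, hinj.comp affinj, ?_, ?_, ?_⟩
  · show f (aff 0) = f s
    congr 1
    ext; show (s : ℝ) + (0 : ℝ) * (t - s) = s; ring
  · show f (aff 1) = f t
    congr 1
    ext; show (s : ℝ) + (1 : ℝ) * (t - s) = t; ring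
  · rw [Set.range_comp, affrange]

/-- The unique arc between two points of an arc is contained in that arc. -/
theorem arcOf_subset_of_isArcBetween (hX : UniquelyArcwiseConnected X) {A : Set X}
    {x y : X} (hA : IsArcBetween A x y) {p q : X} (hp : p ∈ A) (hq : q ∈ A) :
    arcOf hX p q ⊆ A := by
  by_cases hpq : p = q
  · subst hpq; rw [arcOf_self]; exact singleton_subset_iff.2 hp
  · obtain ⟨f, hc, hinj, -, -, hr⟩ := hA
    rw [← hr] at hp hq
    obtain ⟨s, rfl⟩ := hp
    obtain ⟨t, rfl⟩ := hq
    have hst : (s : ℝ) ≠ t := by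
      intro h; exact hpq (congrArg f (Subtype.ext h))
    rcases hst.lt_or_gt with h | h
    · obtain ⟨g, gc, ginj, g0, g1, grange⟩ := subarc hc hinj h
      have : arcOf hX (f s) (f t) = Set.range g :=
        arcOf_unique hX ⟨g, gc, ginj, g0, g1, rfl⟩
      rw [this, grange, ← hr]
      exact (Set.image_subset_range f _).trans subset_rfl
    · obtain ⟨g, gc, ginj, g0, g1, grange⟩ := subarc hc hinj h
      have : arcOf hX (f s) (f t) = Set.range g := by
        rw [arcOf_comm]
        exact arcOf_unique hX ⟨g, gc, ginj, g0, g1, rfl⟩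
      rw [this, grange, ← hr]
      exact (Set.image_subset_range f _).trans subset_rfl

theorem arcOf_subset_arcOf (hX : UniquelyArcwiseConnected X) {x y p q : X}
    (hp : p ∈ arcOf hX x y) (hq : q ∈ arcOf hX x y) :
    arcOf hX p q ⊆ arcOf hX x y := by
  by_cases hxy : x = y
  · subst hxy
    rw [arcOf_self] at hp hq ⊢
    rw [show p = x from hp, show q = x from hq, arcOf_self]
  · exact arcOf_subset_of_isArcBetween hX (isArcBetween_arcOf hX hxy) hp hq

theorem isPreconnected_arcOf_inter (hX : UniquelyArcwiseConnected X) (x y : X)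
    {B : Set X} (hB : IsArc B) : IsPreconnected (arcOf hX x y ∩ B) := by
  apply isPreconnected_of_forall_pair
  intro p hp q hq
  obtain ⟨u, v, hBuv⟩ := hB
  exact ⟨arcOf hX p q,
    subset_inter (arcOf_subset_arcOf hX hp.1 hq.1)
      (arcOf_subset_of_isArcBetween hX hBuv hp.2 hq.2),
    left_mem_arcOf hX p q, right_mem_arcOf hX p q, isPreconnected_arcOf hX p q⟩

/-- Gluing two arcs that meet in exactly one common endpoint. -/
theorem isArcBetween_union {x w z : X} {A1 A2 : Set X}
    (h1 : IsArcBetween A1 x w) (h2 : IsArcBetween A2 w z)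
    (hint : A1 ∩ A2 ⊆ {w}) (_hxz : x ≠ z) :
    IsArcBetween (A1 ∪ A2) x z := by
  obtain ⟨f, fc, finj, f0, f1, fr⟩ := h1
  obtain ⟨g, gc, ginj, g0, g1, gr⟩ := h2
  let p1 : Path x w := { toFun := f, continuous_toFun := fc, source' := f0, target' := f1 }
  let p2 : Path w z := { toFun := g, continuous_toFun := gc, source' := g0, target' := g1 }
  have key : ∀ u v : unitInterval, f u = g v → u = 1 ∧ v = 0 := by
    intro u v huv
    have hmem : f u ∈ A1 ∩ A2 := by
      constructor
      · rw [← fr]; exact mem_range_self _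
      · rw [huv, ← gr]; exact mem_range_self _
    have hfw : f u = w := hint hmem
    constructor
    · exact finj (by rw [hfw, f1])
    · exact ginj (by rw [← huv, hfw, g0])
  refine ⟨(p1.trans p2 : Path x z), (p1.trans p2).continuous, ?_, (p1.trans p2).source,
    (p1.trans p2).target, ?_⟩
  · intro t1 t2 heq
    rw [Path.trans_apply, Path.trans_apply] at heq
    split_ifs at heq with ht1 ht2 ht2
    · have heq' : f ⟨2 * (t1 : ℝ), (unitInterval.mul_pos_mem_iff zero_lt_two).2 ⟨t1.2.1, ht1⟩⟩ =
          f ⟨2 * (t2 : ℝ), (unitInterval.mul_pos_mem_iff zero_lt_two).2 ⟨t2.2.1, ht2⟩⟩ := heq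
      have h2t : 2 * (t1 : ℝ) = 2 * (t2 : ℝ) := congrArg Subtype.val (finj heq')
      ext; linarith
    · exfalso
      have heq' : f ⟨2 * (t1 : ℝ), (unitInterval.mul_pos_mem_iff zero_lt_two).2 ⟨t1.2.1, ht1⟩⟩ =
          g ⟨2 * (t2 : ℝ) - 1, unitInterval.two_mul_sub_one_mem_iff.2
            ⟨(not_le.1 ht2).le, t2.2.2⟩⟩ := heq
      obtain ⟨e1, e2⟩ := key _ _ heq'
      have e2' : (2 * (t2 : ℝ) - 1 : ℝ) = ((0 : unitInterval) : ℝ) := congrArg Subtype.val e2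
      simp only [Set.Icc.coe_zero] at e2'
      have := not_le.1 ht2
      linarith
    · exfalso
      have heq' : f ⟨2 * (t2 : ℝ), (unitInterval.mul_pos_mem_iff zero_lt_two).2 ⟨t2.2.1, ht2⟩⟩ =
          g ⟨2 * (t1 : ℝ) - 1, unitInterval.two_mul_sub_one_mem_iff.2
            ⟨(not_le.1 ht1).le, t1.2.2⟩⟩ := heq.symm
      obtain ⟨e1, e2⟩ := key _ _ heq'
      have e2' : (2 * (t1 : ℝ) - 1 : ℝ) = ((0 : unitInterval) : ℝ) := congrArg Subtype.val e2
      simp only [Set.Icc.coe_zero] at e2'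
      have := not_le.1 ht1
      linarith
    · have heq' : g ⟨2 * (t1 : ℝ) - 1, unitInterval.two_mul_sub_one_mem_iff.2
            ⟨(not_le.1 ht1).le, t1.2.2⟩⟩ =
          g ⟨2 * (t2 : ℝ) - 1, unitInterval.two_mul_sub_one_mem_iff.2
            ⟨(not_le.1 ht2).le, t2.2.2⟩⟩ := heq
      have h2t : 2 * (t1 : ℝ) - 1 = 2 * (t2 : ℝ) - 1 := congrArg Subtype.val (ginj heq')
      ext; linarith
  · rw [Path.trans_range]
    show Set.range f ∪ Set.range g = A1 ∪ A2
    rw [fr, gr]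

/-- In a uniquely arcwise connected space, `[x,z] ⊆ [x,y] ∪ [y,z]`. -/
theorem arcOf_subset_union [T2Space X] [CompactSpace unitInterval]
    (hX : UniquelyArcwiseConnected X) (x y z : X) :
    arcOf hX x z ⊆ arcOf hX x y ∪ arcOf hX y z := by
  by_cases hxy : x = y
  · subst hxy; exact subset_union_right
  by_cases hyz : y = z
  · subst hyz; exact subset_union_left
  by_cases hxz : x = z
  · subst hxz
    rw [arcOf_self]
    exact singleton_subset_iff.2 (Or.inl (left_mem_arcOf hX x y))
  obtain ⟨f, fc, finj, f0, f1, fr⟩ := isArcBetween_arcOf hX hxy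
  set A := arcOf hX x y with hA
  set B := arcOf hX y z with hB
  have hBcompact : IsCompact B := isCompact_arcOf hX y z
  have hBclosed : IsClosed B := hBcompact.isClosed
  have hSclosed : IsClosed (f ⁻¹' B) := hBclosed.preimage fc
  have hScompact : IsCompact (f ⁻¹' B) := hSclosed.isCompact
  have hSne : (f ⁻¹' B).Nonempty := ⟨1, by rw [mem_preimage, f1]; exact left_mem_arcOf hX y z⟩
  have hSrcompact : IsCompact (Subtype.val '' (f ⁻¹' B) : Set ℝ) :=
    hScompact.image continuous_subtype_val
  obtain ⟨r, hrmem, hrleast⟩ := hSrcompact.exists_isLeast (hSne.image _)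
  obtain ⟨s₀, hs₀S, hs₀r⟩ := hrmem
  set w := f s₀ with hw
  have hwB : w ∈ B := hs₀S
  have hmin : ∀ u : unitInterval, f u ∈ B → (s₀ : ℝ) ≤ u := by
    intro u hu
    have := hrleast ⟨u, hu, rfl⟩
    rw [hs₀r]
    exact this
  by_cases hs0 : (s₀ : ℝ) = 0
  · -- x ∈ B, so [x,z] ⊆ B
    have : s₀ = 0 := Subtype.ext hs0
    have hxB : x ∈ B := by rw [← f0, ← this]; exact hwB
    have hzB : z ∈ B := right_mem_arcOf hX y z
    exact (arcOf_subset_of_isArcBetween hX (isArcBetween_arcOf hX hyz) hxB hzB).trans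
      subset_union_right
  by_cases hwz : w = z
  · -- z ∈ A, so [x,z] ⊆ A
    have hzA : z ∈ A := by rw [← hwz, hw, ← fr]; exact mem_range_self _
    have hxA : x ∈ A := left_mem_arcOf hX x y
    exact (arcOf_subset_of_isArcBetween hX (isArcBetween_arcOf hX hxy) hxA hzA).trans
      subset_union_left
  -- main case
  have hs0pos : (0 : ℝ) < s₀ := lt_of_le_of_ne s₀.2.1 (Ne.symm hs0)
  obtain ⟨g, gc, ginj, g0, g1, grange⟩ := subarc fc finj (show ((0 : unitInterval) : ℝ) < s₀ by
    simpa using hs0pos)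
  have hxw : x ≠ w := by
    intro h
    have : f 0 = f s₀ := by rw [f0, ← hw, ← h]
    have := finj this
    exact hs0 (congrArg Subtype.val this).symm
  have hArc1 : IsArcBetween (f '' Set.Icc 0 s₀) x w := by
    refine ⟨g, gc, ginj, ?_, ?_, grange⟩
    · rw [g0, f0]
    · rw [g1]
  have hArc2sub : arcOf hX w z ⊆ B :=
    arcOf_subset_of_isArcBetween hX (isArcBetween_arcOf hX hyz) hwB (right_mem_arcOf hX y z)
  have hArc2 : IsArcBetween (arcOf hX w z) w z := isArcBetween_arcOf hX hwz
  have hint : f '' Set.Icc 0 s₀ ∩ arcOf hX w z ⊆ {w} := by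
    rintro p ⟨⟨u, hu, rfl⟩, hp2⟩
    have hfuB : f u ∈ B := hArc2sub hp2
    have h1 : (s₀ : ℝ) ≤ u := hmin u hfuB
    have h2 : (u : ℝ) ≤ s₀ := hu.2
    have : u = s₀ := Subtype.ext (le_antisymm h2 h1)
    rw [this]; rfl
  have hglue : IsArcBetween (f '' Set.Icc 0 s₀ ∪ arcOf hX w z) x z :=
    isArcBetween_union hArc1 hArc2 hint hxz
  have := arcOf_unique hX hglue
  rw [this]
  apply union_subset_union
  · rw [← fr]; exact Set.image_subset_range f _
  · exact hArc2sub

end ArcBasics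

section DiamLemma

/-- For compact connected subsets of `ℝ` with `C ⊆ A ∪ B`,
`diam C ≤ diam A + diam B`. -/
theorem diam_le_diam_add_diam {A B C : Set ℝ} (hC : C ⊆ A ∪ B)
    (hAc : IsCompact A) (hAp : IsPreconnected A)
    (hBc : IsCompact B) (hBp : IsPreconnected B)
    (hCc : IsCompact C) (hCp : IsPreconnected C) :
    Metric.diam C ≤ Metric.diam A + Metric.diam B := by
  rcases C.eq_empty_or_nonempty with rfl | hCne
  · rw [Metric.diam_empty]
    exact add_nonneg Metric.diam_nonneg Metric.diam_nonneg
  rcases A.eq_empty_or_nonempty with rfl | hAne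
  · have hCB : C ⊆ B := by simpa using hC
    rw [Metric.diam_empty, zero_add]
    exact Metric.diam_mono hCB hBc.isBounded
  rcases B.eq_empty_or_nonempty with rfl | hBne
  · have hCA : C ⊆ A := by simpa using hC
    rw [Metric.diam_empty, add_zero]
    exact Metric.diam_mono hCA hAc.isBounded
  have hAeq : A = Set.Icc (sInf A) (sSup A) := eq_Icc_of_connected_compact ⟨hAne, hAp⟩ hAc
  have hBeq : B = Set.Icc (sInf B) (sSup B) := eq_Icc_of_connected_compact ⟨hBne, hBp⟩ hBc
  have hCeq : C = Set.Icc (sInf C) (sSup C) := eq_Icc_of_connected_compact ⟨hCne, hCp⟩ hCc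
  have hAle : sInf A ≤ sSup A := csInf_le_csSup hAne hAc.bddBelow hAc.bddAbove
  have hBle : sInf B ≤ sSup B := csInf_le_csSup hBne hBc.bddBelow hBc.bddAbove
  have hCle : sInf C ≤ sSup C := csInf_le_csSup hCne hCc.bddBelow hCc.bddAbove
  have hμ : MeasureTheory.volume C ≤ MeasureTheory.volume A + MeasureTheory.volume B :=
    le_trans (MeasureTheory.measure_mono hC) (MeasureTheory.measure_union_le _ _)
  rw [hAeq, hBeq, hCeq, Real.volume_Icc, Real.volume_Icc, Real.volume_Icc,
    ← ENNReal.ofReal_add (by linarith) (by linarith)] at hμ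
  rw [hAeq, hBeq, hCeq, Real.diam_Icc hAle, Real.diam_Icc hBle, Real.diam_Icc hCle]
  exact (ENNReal.ofReal_le_ofReal_iff (by linarith)).1 hμ

end DiamLemma

namespace StandingConstruction

open Set

variable {X : Type*} [MetricSpace X] (sc : StandingConstruction X)

theorem mem_Tn_of_mem_T {x : X} (hx : x ∈ sc.T) : ∃ n, x ∈ sc.Tn n := by
  obtain ⟨i, hi⟩ := mem_iUnion.1 hx
  exact ⟨i, mem_iUnion.2 ⟨i, mem_iUnion.2 ⟨le_refl i, hi⟩⟩⟩

theorem Tn_mono {m n : ℕ} (hmn : m ≤ n) : sc.Tn m ⊆ sc.Tn n := by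
  intro p hp
  simp only [Tn, mem_iUnion] at hp ⊢
  obtain ⟨i, him, hpi⟩ := hp
  exact ⟨i, le_trans him hmn, hpi⟩

theorem arcOf_subset_Tn {n : ℕ} {x y : X} (hx : x ∈ sc.Tn n) (hy : y ∈ sc.Tn n) :
    arcOf sc.huac x y ⊆ sc.Tn n := by
  by_cases hxy : x = y
  · subst hxy; rw [arcOf_self]; exact singleton_subset_iff.2 hx
  have huacT : UniquelyArcwiseConnected ↥(⋃ i ≤ n, sc.I i) := (sc.tree_T n).1.2.2.2.2.2
  have hx' : x ∈ ⋃ i ≤ n, sc.I i := hx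
  have hy' : y ∈ ⋃ i ≤ n, sc.I i := hy
  have hne : (⟨x, hx'⟩ : ↥(⋃ i ≤ n, sc.I i)) ≠ ⟨y, hy'⟩ :=
    fun h => hxy (congrArg Subtype.val h)
  obtain ⟨A', hA', -⟩ := huacT _ _ hne
  obtain ⟨f, fc, finj, f0, f1, fr⟩ := hA'
  have harc : IsArcBetween (Subtype.val '' A') x y :=
    ⟨Subtype.val ∘ f, continuous_subtype_val.comp fc, Subtype.val_injective.comp finj,
      by simp [Function.comp_apply, f0], by simp [Function.comp_apply, f1],
      by rw [Set.range_comp, fr]⟩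
  rw [arcOf_unique sc.huac harc]
  intro p hp
  obtain ⟨p', -, rfl⟩ := hp
  exact p'.2

theorem image_term_subset (x y : X) (i : ℕ) :
    sc.h i '' (arcOf sc.huac x y ∩ sc.I i) ⊆ Set.Icc (0 : ℝ) 1 := by
  rw [← sc.h_image i]
  exact Set.image_mono inter_subset_right

theorem diam_term_le_one (x y : X) (i : ℕ) :
    Metric.diam (sc.h i '' (arcOf sc.huac x y ∩ sc.I i)) ≤ 1 := by
  have := Metric.diam_mono (sc.image_term_subset x y i) (Metric.isBounded_Icc _ _)
  rwa [Real.diam_Icc zero_le_one, sub_zero] at this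

theorem summable_term (x y : X) :
    Summable (fun i : ℕ => (2 : ℝ)⁻¹ ^ (i + 1) *
      Metric.diam (sc.h i '' (arcOf sc.huac x y ∩ sc.I i))) := by
  have hg0 : Summable (fun i : ℕ => (2 : ℝ)⁻¹ ^ i) :=
    summable_geometric_of_lt_one (by norm_num) (by norm_num)
  have hg : Summable (fun i : ℕ => (2 : ℝ)⁻¹ ^ (i + 1)) := by
    simpa [pow_succ] using hg0.mul_right (2 : ℝ)⁻¹
  refine Summable.of_nonneg_of_le
    (fun i => mul_nonneg (by positivity) Metric.diam_nonneg) (fun i => ?_) hg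
  exact mul_le_of_le_one_right (by positivity) (sc.diam_term_le_one x y i)

theorem d_nonneg (x y : X) : 0 ≤ sc.d x y :=
  tsum_nonneg (fun i => mul_nonneg (by positivity) Metric.diam_nonneg)

theorem d_self (x : X) : sc.d x x = 0 := by
  have h : ∀ i : ℕ, (2 : ℝ)⁻¹ ^ (i + 1) *
      Metric.diam (sc.h i '' (arcOf sc.huac x x ∩ sc.I i)) = 0 := by
    intro i
    rw [arcOf_self]
    have hss : (({x} : Set X) ∩ sc.I i).Subsingleton :=
      subsingleton_singleton.anti inter_subset_left
    rw [Metric.diam_subsingleton (hss.image _), mul_zero]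
  rw [StandingConstruction.d, tsum_congr h, tsum_zero]

theorem d_comm (x y : X) : sc.d x y = sc.d y x := by
  simp only [StandingConstruction.d, arcOf_comm sc.huac x y]

theorem isCompact_image_term (x y : X) (i : ℕ) :
    IsCompact (sc.h i '' (arcOf sc.huac x y ∩ sc.I i)) :=
  (((isCompact_arcOf sc.huac x y).inter (sc.arc_I i).isCompact)).image_of_continuousOn
    ((sc.h_cont i).mono inter_subset_right)

theorem isPreconnected_image_term (x y : X) (i : ℕ) :
    IsPreconnected (sc.h i '' (arcOf sc.huac x y ∩ sc.I i)) :=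
  (isPreconnected_arcOf_inter sc.huac x y (sc.arc_I i)).image _
    ((sc.h_cont i).mono inter_subset_right)

theorem d_triangle (x y z : X) : sc.d x z ≤ sc.d x y + sc.d y z := by
  have hsum1 := sc.summable_term x y
  have hsum2 := sc.summable_term y z
  have hsum0 := sc.summable_term x z
  have hterm : ∀ i : ℕ, (2 : ℝ)⁻¹ ^ (i + 1) *
      Metric.diam (sc.h i '' (arcOf sc.huac x z ∩ sc.I i)) ≤
      (2 : ℝ)⁻¹ ^ (i + 1) * Metric.diam (sc.h i '' (arcOf sc.huac x y ∩ sc.I i)) +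
      (2 : ℝ)⁻¹ ^ (i + 1) * Metric.diam (sc.h i '' (arcOf sc.huac y z ∩ sc.I i)) := by
    intro i
    have hsub : arcOf sc.huac x z ∩ sc.I i ⊆
        (arcOf sc.huac x y ∩ sc.I i) ∪ (arcOf sc.huac y z ∩ sc.I i) := by
      rintro p ⟨hp1, hp2⟩
      rcases arcOf_subset_union sc.huac x y z hp1 with h | h
      · exact Or.inl ⟨h, hp2⟩
      · exact Or.inr ⟨h, hp2⟩
    have himsub : sc.h i '' (arcOf sc.huac x z ∩ sc.I i) ⊆
        sc.h i '' (arcOf sc.huac x y ∩ sc.I i) ∪ sc.h i '' (arcOf sc.huac y z ∩ sc.I i) := by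
      rw [← Set.image_union]
      exact Set.image_mono hsub
    have hd := diam_le_diam_add_diam himsub
      (sc.isCompact_image_term x y i) (sc.isPreconnected_image_term x y i)
      (sc.isCompact_image_term y z i) (sc.isPreconnected_image_term y z i)
      (sc.isCompact_image_term x z i) (sc.isPreconnected_image_term x z i)
    nlinarith [pow_nonneg (by norm_num : (0:ℝ) ≤ (2:ℝ)⁻¹) (i + 1)]
  calc sc.d x z ≤ ∑' i : ℕ, ((2 : ℝ)⁻¹ ^ (i + 1) *
        Metric.diam (sc.h i '' (arcOf sc.huac x y ∩ sc.I i)) +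
        (2 : ℝ)⁻¹ ^ (i + 1) * Metric.diam (sc.h i '' (arcOf sc.huac y z ∩ sc.I i))) :=
      Summable.tsum_le_tsum hterm hsum0 (hsum1.add hsum2)
    _ = sc.d x y + sc.d y z := Summable.tsum_add hsum1 hsum2

theorem d_mono {u v x y : X} (hsub : arcOf sc.huac u v ⊆ arcOf sc.huac x y) :
    sc.d u v ≤ sc.d x y := by
  refine Summable.tsum_le_tsum (fun i => ?_) (sc.summable_term u v) (sc.summable_term x y)
  refine mul_le_mul_of_nonneg_left ?_ (by positivity)
  refine Metric.diam_mono (Set.image_mono (inter_subset_inter_left _ hsub)) ?_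
  exact (Metric.isBounded_Icc _ _).subset (sc.image_term_subset x y i)

theorem d_eq_zero_iff {x y : X} (hx : x ∈ sc.T) (hy : y ∈ sc.T) :
    sc.d x y = 0 ↔ x = y := by
  constructor
  · intro hd
    by_contra hxy
    obtain ⟨m, hxm⟩ := sc.mem_Tn_of_mem_T hx
    obtain ⟨k, hyk⟩ := sc.mem_Tn_of_mem_T hy
    set n := max m k with hn
    have hxn : x ∈ sc.Tn n := sc.Tn_mono (le_max_left m k) hxm
    have hyn : y ∈ sc.Tn n := sc.Tn_mono (le_max_right m k) hyk
    have harcTn : arcOf sc.huac x y ⊆ sc.Tn n := sc.arcOf_subset_Tn hxn hyn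
    -- every term of the sum is zero
    have hterm0 : ∀ i : ℕ, Metric.diam (sc.h i '' (arcOf sc.huac x y ∩ sc.I i)) = 0 := by
      intro i
      have hle : (2 : ℝ)⁻¹ ^ (i + 1) *
          Metric.diam (sc.h i '' (arcOf sc.huac x y ∩ sc.I i)) ≤ sc.d x y :=
        Summable.le_tsum (sc.summable_term x y) i
          (fun j _ => mul_nonneg (by positivity) Metric.diam_nonneg)
      rw [hd] at hle
      have hge : 0 ≤ (2 : ℝ)⁻¹ ^ (i + 1) *
          Metric.diam (sc.h i '' (arcOf sc.huac x y ∩ sc.I i)) :=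
        mul_nonneg (by positivity) Metric.diam_nonneg
      have := le_antisymm hle hge
      have hpow : (0 : ℝ) < (2 : ℝ)⁻¹ ^ (i + 1) := by positivity
      nlinarith [Metric.diam_nonneg (s := sc.h i '' (arcOf sc.huac x y ∩ sc.I i))]
    -- each intersection with an arc is a subsingleton
    have hss : ∀ i : ℕ, (arcOf sc.huac x y ∩ sc.I i).Subsingleton := by
      intro i p hp q hq
      by_contra hpq
      have hne' : sc.h i p ≠ sc.h i q := fun e => hpq (sc.h_inj i hp.2 hq.2 e)
      have hb : Bornology.IsBounded (sc.h i '' (arcOf sc.huac x y ∩ sc.I i)) :=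
        (Metric.isBounded_Icc _ _).subset (sc.image_term_subset x y i)
      have hdle := Metric.dist_le_diam_of_mem hb (mem_image_of_mem _ hp)
        (mem_image_of_mem _ hq)
      rw [hterm0 i] at hdle
      exact hne' (dist_le_zero.1 hdle)
    -- the arc is finite
    have hfin : (arcOf sc.huac x y).Finite := by
      have hcover : arcOf sc.huac x y ⊆ ⋃ i ∈ Set.Iic n, (arcOf sc.huac x y ∩ sc.I i) := by
        intro p hp
        have hpTn : p ∈ sc.Tn n := harcTn hp
        simp only [Tn, mem_iUnion] at hpTn
        obtain ⟨i, hin, hpi⟩ := hpTn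
        exact mem_iUnion.2 ⟨i, mem_iUnion.2 ⟨hin, hp, hpi⟩⟩
      exact ((Set.finite_Iic n).biUnion (fun i _ => (hss i).finite)).subset hcover
    -- but the arc is infinite
    obtain ⟨f, -, finj, -, -, fr⟩ := isArcBetween_arcOf sc.huac hxy
    haveI : Infinite ↥unitInterval := Set.Icc.infinite (by norm_num)
    have hinf : (arcOf sc.huac x y).Infinite := by
      rw [← fr]
      exact Set.infinite_range_of_injective finj
    exact hinf hfin
  · rintro rfl
    exact sc.d_self x

end StandingConstruction
/-- **Section 3.1.** The function `d` of the standing construction is a convex metric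
on `T`: it satisfies separation, symmetry and the triangle inequality on `T`, and
`d(u,v) ≤ d(x,y)` whenever `[u,v] ⊆ [x,y]`. -/
theorem sc_d_isConvexMetric
    {X : Type*} [MetricSpace X] [CompactSpace X] [ConnectedSpace X] [Nonempty X]
    (sc : StandingConstruction X) :
    (∀ x ∈ sc.T, ∀ y ∈ sc.T, (sc.d x y = 0 ↔ x = y)) ∧
    (∀ x ∈ sc.T, ∀ y ∈ sc.T, sc.d x y = sc.d y x) ∧
    (∀ x ∈ sc.T, ∀ y ∈ sc.T, ∀ z ∈ sc.T, sc.d x z ≤ sc.d x y + sc.d y z) ∧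
    (∀ u ∈ sc.T, ∀ v ∈ sc.T, ∀ x ∈ sc.T, ∀ y ∈ sc.T,
      arcOf sc.huac u v ⊆ arcOf sc.huac x y → sc.d u v ≤ sc.d x y) := by
  refine ⟨fun x hx y hy => sc.d_eq_zero_iff hx hy,
    fun x _ y _ => sc.d_comm x y,
    fun x _ y _ z _ => sc.d_triangle x y z,
    fun u _ v _ x _ y _ hsub => sc.d_mono hsub⟩
end
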